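/- arXiv:2009.06125 — 2 statements merged into one kernel-verified Lean document; each statement's English description precedes it below -/
import Mathlib

section
/- Let f : ℝ^d → ℝ be differentiable with ∇f bounded by M and L-Lipschitz. Fix α, β ∈ (0,1), ε > 0, x₀ ∈ ℝ^d, m₀ ∈ ℝ^d and v₀ ∈ ℝ^d with v₀ ≥ 0 componentwise. For each learning rate η > 0 let (x_k^η) be the Adam iterates started from (x₀, m₀, v₀), and let X^η : [0,∞) → ℝ^d be the piecewise-constant interpolation X^η(t) = x_k^η for t ∈ [kη, (k+1)η). Let x : [0,∞) → ℝ^d be a solution of the ODE ẋ = −∇f(x)/(|∇f(x)| + ε) (componentwise) with x(0) = x₀. Then for every T > 0, lim_{η→0} sup_{t∈[0,T]} ‖X^η(t) − x(t)‖ = 0. -/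
private lemma sqrt_add_le' (x y : ℝ) (hx : 0 ≤ x) (hy : 0 ≤ y) :
    Real.sqrt (x + y) ≤ Real.sqrt x + Real.sqrt y := by
  rw [show x + y = Real.sqrt x ^ 2 + Real.sqrt y ^ 2 by rw [Real.sq_sqrt hx, Real.sq_sqrt hy]]
  have h1 := Real.sqrt_nonneg x
  have h2 := Real.sqrt_nonneg y
  rw [show Real.sqrt x ^2 + Real.sqrt y ^2 = (Real.sqrt x + Real.sqrt y)^2 - 2*(Real.sqrt x * Real.sqrt y) by ring]
  calc Real.sqrt ((Real.sqrt x + Real.sqrt y)^2 - 2*(Real.sqrt x * Real.sqrt y))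
      ≤ Real.sqrt ((Real.sqrt x + Real.sqrt y)^2) := Real.sqrt_le_sqrt (by nlinarith)
    _ = |Real.sqrt x + Real.sqrt y| := Real.sqrt_sq_eq_abs _
    _ = Real.sqrt x + Real.sqrt y := abs_of_nonneg (by positivity)

private lemma abs_sqrt_sub_sqrt (a b : ℝ) (ha : 0 ≤ a) (hb : 0 ≤ b) :
    |Real.sqrt a - Real.sqrt b| ≤ Real.sqrt |a - b| := by
  rcases le_total a b with h | h
  · rw [abs_of_nonpos (by simpa using Real.sqrt_le_sqrt h),
      abs_of_nonpos (by linarith : a - b ≤ 0), show -(a-b) = b - a by ring]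
    have key : Real.sqrt b ≤ Real.sqrt a + Real.sqrt (b - a) := by
      calc Real.sqrt b = Real.sqrt (a + (b - a)) := by rw [show a + (b-a) = b by ring]
        _ ≤ _ := sqrt_add_le' a (b-a) ha (by linarith)
    linarith
  · rw [abs_of_nonneg (by simpa using Real.sqrt_le_sqrt h),
      abs_of_nonneg (by linarith : 0 ≤ a - b)]
    have key : Real.sqrt a ≤ Real.sqrt b + Real.sqrt (a - b) := by
      calc Real.sqrt a = Real.sqrt (b + (a - b)) := by rw [show b + (a-b) = a by ring]
        _ ≤ _ := sqrt_add_le' b (a-b) hb (by linarith)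
    linarith

private lemma quot_decomp (ε a b s r : ℝ) (hε : 0 < ε) (hs : 0 ≤ s) (hr : 0 ≤ r) :
    a / (s + ε) - b / (r + ε) = (a - b) / (s + ε) + b * (r - s) / ((s + ε) * (r + ε)) := by
  have h1 : s + ε ≠ 0 := by positivity
  have h2 : r + ε ≠ 0 := by positivity
  field_simp
  ring

private lemma div_abs_le (ε c D : ℝ) (hε : 0 < ε) (hD : ε ≤ D) : |c| / D ≤ |c| / ε :=
  div_le_div_of_nonneg_left (abs_nonneg _) hε hD

private lemma quot_bound (ε a b s r : ℝ) (hε : 0 < ε) (hs : 0 ≤ s) (hr : 0 ≤ r) :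
    |a / (s + ε) - b / (r + ε)| ≤ |a - b| / ε + |b| * |r - s| / ε ^ 2 := by
  rw [quot_decomp ε a b s r hε hs hr]
  have h1 : |(a - b) / (s + ε)| ≤ |a - b| / ε := by
    rw [abs_div, abs_of_pos (show (0:ℝ) < s + ε by linarith)]
    exact div_abs_le ε (a-b) (s+ε) hε (by linarith)
  have h2 : |b * (r - s) / ((s + ε) * (r + ε))| ≤ |b| * |r - s| / ε ^ 2 := by
    rw [abs_div, abs_mul, abs_of_pos (show (0:ℝ) < (s + ε) * (r + ε) by positivity)]
    apply div_le_div₀ (by positivity) le_rfl (by positivity) (by nlinarith)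
  calc _ ≤ |(a - b) / (s + ε)| + |b * (r - s) / ((s + ε) * (r + ε))| := abs_add_le _ _
    _ ≤ _ := add_le_add h1 h2

private lemma phi_lip (ε a b : ℝ) (hε : 0 < ε) :
    |a / (|a| + ε) - b / (|b| + ε)| ≤ 2 / ε * |a - b| := by
  rw [quot_decomp ε a b (|a|) (|b|) hε (abs_nonneg a) (abs_nonneg b)]
  have ha := abs_nonneg a
  have hb := abs_nonneg b
  have h1 : |(a - b) / (|a| + ε)| ≤ |a - b| / ε := by
    rw [abs_div, abs_of_pos (show (0:ℝ) < |a| + ε by linarith)]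
    exact div_abs_le ε (a-b) (|a|+ε) hε (by linarith)
  have h2 : |b * (|b| - |a|) / ((|a| + ε) * (|b| + ε))| ≤ |a - b| / ε := by
    rw [abs_div, abs_mul, abs_of_pos (show (0:ℝ) < (|a| + ε) * (|b| + ε) by positivity)]
    have hbb : |(|b| - |a|)| ≤ |a - b| := by
      rw [abs_sub_comm a b]; exact abs_abs_sub_abs_le_abs_sub b a
    calc |b| * |(|b| - |a|)| / ((|a| + ε) * (|b| + ε))
        ≤ (|b| + ε) * |a - b| / ((|b| + ε) * ε) := by
          apply div_le_div₀ (by positivity)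
            (by nlinarith [mul_le_mul_of_nonneg_left hbb hb,
              mul_nonneg hε.le (abs_nonneg (a-b))]) (by positivity) (by nlinarith)
      _ = |a - b| / ε := by
          have h3 : |b| + ε ≠ 0 := by positivity
          have h4 : ε ≠ 0 := ne_of_gt hε
          field_simp
  calc |(a - b) / (|a| + ε) + b * (|b| - |a|) / ((|a| + ε) * (|b| + ε))|
      ≤ |(a - b) / (|a| + ε)| + |b * (|b| - |a|) / ((|a| + ε) * (|b| + ε))| := abs_add_le _ _
    _ ≤ |a - b| / ε + |a - b| / ε := add_le_add h1 h2
    _ = 2 / ε * |a - b| := by ring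

private lemma phi_le_one (ε b : ℝ) (hε : 0 < ε) : |b / (|b| + ε)| ≤ 1 := by
  have hb := abs_nonneg b
  rw [abs_div, abs_of_pos (show (0:ℝ) < |b| + ε by linarith)]
  rw [div_le_one (by linarith)]
  linarith

private lemma euclid_norm_le {d : ℕ} (w : EuclideanSpace ℝ (Fin d)) (c : ℝ) (hc : 0 ≤ c)
    (h : ∀ i, |w i| ≤ c) : ‖w‖ ≤ Real.sqrt d * c := by
  rw [EuclideanSpace.norm_eq]
  calc Real.sqrt (∑ i, ‖w i‖ ^ 2) ≤ Real.sqrt (∑ _i : Fin d, c ^ 2) := by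
        apply Real.sqrt_le_sqrt
        apply Finset.sum_le_sum
        intro i _
        have := h i
        rw [Real.norm_eq_abs]
        nlinarith [abs_nonneg (w i)]
    _ = Real.sqrt (d * c ^ 2) := by rw [Finset.sum_const]; simp [mul_comm]
    _ = Real.sqrt d * c := by
        rw [Real.sqrt_mul (Nat.cast_nonneg d), Real.sqrt_sq hc]

private lemma euclid_coord_le {d : ℕ} (w : EuclideanSpace ℝ (Fin d)) (i : Fin d) :
    |w i| ≤ ‖w‖ := by
  rw [EuclideanSpace.norm_eq, ← Real.sqrt_sq_eq_abs]
  apply Real.sqrt_le_sqrt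
  calc w i ^ 2 = ‖w i‖ ^2 := by rw [Real.norm_eq_abs, sq_abs]
    _ ≤ ∑ j, ‖w j‖ ^ 2 := Finset.single_le_sum (f := fun j => ‖w j‖^2) (fun j _ => by positivity) (Finset.mem_univ i)

private lemma sqrt_pow'' (a : ℝ) (ha : 0 ≤ a) (n : ℕ) :
    Real.sqrt (a ^ n) = (Real.sqrt a) ^ n := by
  induction n with
  | zero => simp
  | succ k ih => rw [pow_succ, pow_succ, Real.sqrt_mul (by positivity), ih]

private lemma field_id1 (a b c c' e : ℝ) (ha : a ≠ 0) (h : c = c' * e) :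
    (b + c / a) / a = b / a + c' / a ^ 2 * e := by
  subst h
  field_simp

private lemma gronwall_step (η K sd A g c1 c2 sη B γ cc kk uu P P1 e ρ : ℝ)
    (hη : 0 < η) (hK : 0 ≤ K) (hsd : 0 ≤ sd) (hA : 0 ≤ A) (hg : 0 ≤ g)
    (hcc : 0 ≤ cc) (hρ0 : 0 ≤ ρ) (hkk : 0 ≤ kk) (hB : 0 ≤ B)
    (huu : uu = η * K * sd)
    (hP1 : P1 = (1 + uu) * P)
    (hP1one : 1 ≤ P1)
    (hρ : ρ = P * (B * (1 - g) + kk * η * cc))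
    (hBγ : B * (1 - γ) = η * A)
    (hcceq : cc = c1 * η + c2 * sη + K * sd * η)
    (he : e ≤ ρ) :
    e + η * ((A * g + (c1 * η + c2 * sη)) + K * (sd * ρ) + K * (sd * η))
      ≤ P1 * (B * (1 - γ * g) + (kk + 1) * η * cc) := by
  have key : P1 * (B * (1 - γ * g) + (kk + 1) * η * cc)
      = (1 + uu) * ρ + P1 * (B * (1 - γ) * g + η * cc) := by
    rw [hρ, hP1]; ring
  have h2 : η * A * g + η * cc ≤ P1 * (B * (1 - γ) * g + η * cc) := by
    rw [hBγ]
    have hX : 0 ≤ η * A * g + η * cc :=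
      add_nonneg (mul_nonneg (mul_nonneg hη.le hA) hg) (mul_nonneg hη.le hcc)
    calc η * A * g + η * cc ≤ P1 * (η * A * g + η * cc) := le_mul_of_one_le_left hX hP1one
      _ = P1 * (η * A * g + η * cc) := rfl
  have h3 : e + η * ((A * g + (c1 * η + c2 * sη)) + K * (sd * ρ) + K * (sd * η))
      = e + uu * ρ + (η * A * g + η * cc) := by rw [huu, hcceq]; ring
  have h4 : e + uu * ρ ≤ (1 + uu) * ρ := by nlinarith [he]
  rw [h3, key]
  linarith

set_option maxHeartbeats 8000000 in
/-- Proposition 1 (Adam case): with fixed momentum factors `α, β ∈ (0,1)` and stabilizer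
`ε > 0`, as the learning rate `η → 0` the piecewise-constant interpolation of the Adam
iterates converges uniformly on `[0, T]` to the solution of the ODE
`ẋ = −∇f(x)/(|∇f(x)| + ε)` (componentwise). -/
theorem adam_converges_to_signGD_ode
    (d : ℕ) (f : EuclideanSpace ℝ (Fin d) → ℝ)
    (hf : Differentiable ℝ f)
    (M L : ℝ)
    (hM : ∀ z, ‖gradient f z‖ ≤ M)
    (hL : ∀ z w, ‖gradient f z - gradient f w‖ ≤ L * ‖z - w‖)
    (α β ε : ℝ) (hα : α ∈ Set.Ioo (0 : ℝ) 1) (hβ : β ∈ Set.Ioo (0 : ℝ) 1) (hε : 0 < ε)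
    (x₀ m₀ v₀ : EuclideanSpace ℝ (Fin d)) (hv₀ : ∀ i, 0 ≤ v₀ i)
    -- the Adam iterates `x η k`, `m η k`, `v η k` for each learning rate `η > 0`
    (x m v : ℝ → ℕ → EuclideanSpace ℝ (Fin d))
    (hx0 : ∀ η, 0 < η → x η 0 = x₀)
    (hm0 : ∀ η, 0 < η → m η 0 = m₀)
    (hv0 : ∀ η, 0 < η → v η 0 = v₀)
    (hv : ∀ η, 0 < η → ∀ k i,
      v η (k + 1) i = α * v η k i + (1 - α) * (gradient f (x η k) i) ^ 2)
    (hm : ∀ η, 0 < η → ∀ k i,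
      m η (k + 1) i = β * m η k i + (1 - β) * gradient f (x η k) i)
    (hx : ∀ η, 0 < η → ∀ k i,
      x η (k + 1) i = x η k i -
        η * (m η (k + 1) i / (1 - β ^ (k + 1))) /
          (Real.sqrt (v η (k + 1) i / (1 - α ^ (k + 1))) + ε))
    -- the piecewise-constant interpolation `X η`
    (X : ℝ → ℝ → EuclideanSpace ℝ (Fin d))
    (hX : ∀ η, 0 < η → ∀ t : ℝ, 0 ≤ t → ∀ k : ℕ,
      t ∈ Set.Ico ((k : ℝ) * η) (((k : ℝ) + 1) * η) → X η t = x η k)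
    -- the solution `y` of the limiting ODE
    (y : ℝ → EuclideanSpace ℝ (Fin d))
    (hy0 : y 0 = x₀)
    (hy : ∀ t : ℝ, 0 ≤ t → ∀ i,
      HasDerivAt (fun s => y s i)
        (-(gradient f (y t) i / (|gradient f (y t) i| + ε))) t) :
    ∀ T > (0 : ℝ), ∀ τ > (0 : ℝ), ∃ η₀ > (0 : ℝ), ∀ η, 0 < η → η < η₀ →
      ∀ t ∈ Set.Icc (0 : ℝ) T, ‖X η t - y t‖ < τ := by
  intro T hT τ hτ
  obtain ⟨hα0, hα1⟩ := hα
  obtain ⟨hβ0, hβ1⟩ := hβ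
  have h1β : (0:ℝ) < 1 - β := by linarith
  have h1α : (0:ℝ) < 1 - α := by linarith
  -- nonnegative versions of the constants
  set L' : ℝ := max L 0 with hL'def
  set M' : ℝ := max M 0 with hM'def
  have hL'0 : 0 ≤ L' := le_max_right _ _
  have hM'0 : 0 ≤ M' := le_max_right _ _
  have hL' : ∀ z w, ‖gradient f z - gradient f w‖ ≤ L' * ‖z - w‖ := fun z w =>
    (hL z w).trans (mul_le_mul_of_nonneg_right (le_max_left _ _) (norm_nonneg _))
  have hM' : ∀ z, ‖gradient f z‖ ≤ M' := fun z => (hM z).trans (le_max_left _ _)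
  have hgM : ∀ z i, |gradient f z i| ≤ M' := fun z i =>
    (euclid_coord_le _ i).trans (hM' z)
  have hgL : ∀ z w i, |gradient f z i - gradient f w i| ≤ L' * ‖z - w‖ := by
    intro z w i
    have h1 := euclid_coord_le (gradient f z - gradient f w) i
    simp only [PiLp.sub_apply] at h1
    exact h1.trans (hL' z w)
  -- the constants of the proof
  set Cm : ℝ := (β * ‖m₀‖ + M') / (1 - β) with hCmdef
  have hCm0 : 0 ≤ Cm := by positivity
  set C : ℝ := Real.sqrt d * Cm / ε with hCdef
  have hC0 : 0 ≤ C := by positivity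
  set K : ℝ := 2 * L' / ε with hKdef
  have hK0 : 0 ≤ K := by positivity
  set γ : ℝ := max β (Real.sqrt α) with hγdef
  have hγ0 : 0 < γ := lt_max_of_lt_left hβ0
  have hγ1 : γ < 1 := by
    apply max_lt hβ1
    rw [show (1:ℝ) = Real.sqrt 1 by simp]
    exact Real.sqrt_lt_sqrt (le_of_lt hα0) hα1
  have h1γ : (0:ℝ) < 1 - γ := by linarith
  set A : ℝ := β * ‖m₀‖ / ((1 - β) * ε)
      + M' / ε ^ 2 * (Real.sqrt α * Real.sqrt (‖v₀‖ / (1 - α))) with hAdef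
  have hA0 : 0 ≤ A := by positivity
  set c₁ : ℝ := L' * C / ((1 - β) ^ 2 * ε) with hc₁def
  have hc₁0 : 0 ≤ c₁ := by positivity
  set c₂ : ℝ := M' / ε ^ 2 * Real.sqrt (2 * M' * L' * C / (1 - α) ^ 2) with hc₂def
  have hc₂0 : 0 ≤ c₂ := by positivity
  set P₁ : ℝ := Real.sqrt d * Real.exp (K * Real.sqrt d * T) * (A / (1 - γ) + T * (c₁ + K * Real.sqrt d))
      + Real.sqrt d with hP₁def
  have hP₁0 : 0 ≤ P₁ := by positivity
  set P₂ : ℝ := Real.sqrt d * Real.exp (K * Real.sqrt d * T) * T * c₂ with hP₂def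
  have hP₂0 : 0 ≤ P₂ := by positivity
  refine ⟨min 1 ((τ / (P₁ + P₂ + 1)) ^ 2), by positivity, ?_⟩
  intro η hη hηlt
  clear_value L' M' Cm C K γ A c₁ c₂ P₁ P₂
  -- basic power facts
  have hβk : ∀ k : ℕ, β ^ (k + 1) ≤ β := fun k =>
    pow_le_of_le_one (le_of_lt hβ0) (le_of_lt hβ1) (Nat.succ_ne_zero k)
  have hαk : ∀ k : ℕ, α ^ (k + 1) ≤ α := fun k =>
    pow_le_of_le_one (le_of_lt hα0) (le_of_lt hα1) (Nat.succ_ne_zero k)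
  have h1βk : ∀ k : ℕ, 0 < 1 - β ^ (k + 1) := fun k => by have := hβk k; linarith
  have h1αk : ∀ k : ℕ, 0 < 1 - α ^ (k + 1) := fun k => by have := hαk k; linarith
  have h1βk' : ∀ k : ℕ, 1 - β ≤ 1 - β ^ (k + 1) := fun k => by have := hβk k; linarith
  have h1αk' : ∀ k : ℕ, 1 - α ≤ 1 - α ^ (k + 1) := fun k => by have := hαk k; linarith
  -- nonnegativity of v
  have hvnn : ∀ k i, 0 ≤ v η k i := by
    intro k
    induction k with
    | zero => intro i; rw [hv0 η hη]; exact hv₀ i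
    | succ n ih =>
      intro i
      rw [hv η hη n i]
      have h1 : 0 ≤ α * v η n i := mul_nonneg (le_of_lt hα0) (ih i)
      have h2 : 0 ≤ (1 - α) * gradient f (x η n) i ^ 2 :=
        mul_nonneg (le_of_lt h1α) (sq_nonneg _)
      linarith only [h1, h2]
  -- bound on |m|
  have hmabs : ∀ k i, |m η k i| ≤ β ^ k * ‖m₀‖ + M' := by
    intro k
    induction k with
    | zero =>
      intro i
      rw [hm0 η hη, pow_zero, one_mul]
      have := euclid_coord_le m₀ i
      linarith only [this, hM'0]
    | succ n ih =>
      intro i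
      rw [hm η hη n i]
      calc |β * m η n i + (1 - β) * gradient f (x η n) i|
          ≤ |β * m η n i| + |(1 - β) * gradient f (x η n) i| := abs_add_le _ _
        _ = β * |m η n i| + (1 - β) * |gradient f (x η n) i| := by
            rw [abs_mul, abs_mul, abs_of_pos hβ0, abs_of_pos h1β]
        _ ≤ β * (β ^ n * ‖m₀‖ + M') + (1 - β) * M' := by
            have h1 := ih i
            have h2 := hgM (x η n) i
            have h3 := mul_le_mul_of_nonneg_left h1 (le_of_lt hβ0)
            have h4 := mul_le_mul_of_nonneg_left h2 (le_of_lt h1β)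
            linarith only [h1, h2, h3, h4]
        _ = β ^ (n + 1) * ‖m₀‖ + M' := by ring
  -- bound on the bias-corrected m
  have hmhat : ∀ k i, |m η (k + 1) i / (1 - β ^ (k + 1))| ≤ Cm := by
    intro k i
    rw [abs_div, abs_of_pos (h1βk k), hCmdef]
    apply div_le_div₀ (add_nonneg (mul_nonneg (le_of_lt hβ0) (norm_nonneg _)) hM'0) ?_
      h1β (h1βk' k)
    have h1 := hmabs (k + 1) i
    have h2 : β ^ (k + 1) * ‖m₀‖ ≤ β * ‖m₀‖ :=
      mul_le_mul_of_nonneg_right (hβk k) (norm_nonneg _)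
    linarith only [h1, h2]
  -- componentwise step bound
  have hstep : ∀ k i, |x η (k + 1) i - x η k i| ≤ η * Cm / ε := by
    intro k i
    rw [hx η hη k i]
    have hs0 : 0 ≤ Real.sqrt (v η (k + 1) i / (1 - α ^ (k + 1))) := Real.sqrt_nonneg _
    rw [show x η k i - η * (m η (k + 1) i / (1 - β ^ (k + 1))) /
          (Real.sqrt (v η (k + 1) i / (1 - α ^ (k + 1))) + ε) - x η k i
        = -(η * (m η (k + 1) i / (1 - β ^ (k + 1))) /
          (Real.sqrt (v η (k + 1) i / (1 - α ^ (k + 1))) + ε)) by ring]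
    rw [abs_neg, abs_div, abs_mul, abs_of_pos hη,
      abs_of_pos (show (0:ℝ) < Real.sqrt (v η (k + 1) i / (1 - α ^ (k + 1))) + ε by linarith only [hs0, hε])]
    calc η * |m η (k + 1) i / (1 - β ^ (k + 1))| /
          (Real.sqrt (v η (k + 1) i / (1 - α ^ (k + 1))) + ε)
        ≤ η * Cm / (Real.sqrt (v η (k + 1) i / (1 - α ^ (k + 1))) + ε) := by
          apply div_le_div_of_nonneg_right ?_ (by linarith only [hs0, hε])
          exact mul_le_mul_of_nonneg_left (hmhat k i) (le_of_lt hη)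
      _ ≤ η * Cm / ε := by
          apply div_le_div_of_nonneg_left (mul_nonneg (le_of_lt hη) hCm0) hε (by linarith only [hs0])
  -- step bound in norm
  have hstepn : ∀ k, ‖x η (k + 1) - x η k‖ ≤ η * C := by
    intro k
    have h1 : ‖x η (k + 1) - x η k‖ ≤ Real.sqrt d * (η * Cm / ε) := by
      apply euclid_norm_le _ _ (div_nonneg (mul_nonneg (le_of_lt hη) hCm0) (le_of_lt hε))
      intro i
      simp only [PiLp.sub_apply]
      exact hstep k i
    calc ‖x η (k + 1) - x η k‖ ≤ Real.sqrt d * (η * Cm / ε) := h1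
      _ = η * C := by rw [hCdef]; ring
  have hLC0 : 0 ≤ L' * η * C := mul_nonneg (mul_nonneg hL'0 (le_of_lt hη)) hC0
  have hMLC0 : 0 ≤ 2 * M' * L' * η * C :=
    mul_nonneg (mul_nonneg (mul_nonneg (mul_nonneg (by norm_num) hM'0) hL'0) (le_of_lt hη)) hC0
  -- error of the first moment estimate
  have hEm : ∀ k i, |m η (k + 1) i - (1 - β ^ (k + 1)) * gradient f (x η k) i|
      ≤ β ^ (k + 1) * ‖m₀‖ + L' * η * C / (1 - β) := by
    intro k
    induction k with
    | zero =>
      intro i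
      have h1 : m η 1 i - (1 - β ^ 1) * gradient f (x η 0) i = β * m₀ i := by
        rw [hm η hη 0 i, hm0 η hη, pow_one]; ring
      rw [h1, abs_mul, abs_of_pos hβ0, pow_one]
      have h2 := euclid_coord_le m₀ i
      have h3 : β * |m₀ i| ≤ β * ‖m₀‖ := mul_le_mul_of_nonneg_left h2 (le_of_lt hβ0)
      have h4 : 0 ≤ L' * η * C / (1 - β) := div_nonneg hLC0 (le_of_lt h1β)
      linarith only [h2, h3, h4]
    | succ n ih =>
      intro i
      have heq : m η (n + 2) i - (1 - β ^ (n + 2)) * gradient f (x η (n + 1)) i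
          = β * ((m η (n + 1) i - (1 - β ^ (n + 1)) * gradient f (x η n) i)
            + (1 - β ^ (n + 1)) * (gradient f (x η n) i - gradient f (x η (n + 1)) i)) := by
        rw [hm η hη (n + 1) i]
        ring
      rw [heq, abs_mul, abs_of_pos hβ0]
      have h1 := ih i
      have h2 : |(1 - β ^ (n + 1)) * (gradient f (x η n) i - gradient f (x η (n + 1)) i)|
          ≤ L' * η * C := by
        rw [abs_mul, abs_of_pos (h1βk n)]
        have h3 := hgL (x η n) (x η (n + 1)) i
        have h4 : ‖x η n - x η (n + 1)‖ = ‖x η (n + 1) - x η n‖ := norm_sub_rev _ _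
        have h5 : |gradient f (x η n) i - gradient f (x η (n + 1)) i| ≤ L' * (η * C) := by
          rw [h4] at h3
          exact h3.trans (mul_le_mul_of_nonneg_left (hstepn n) hL'0)
        have h6 : (1 - β ^ (n + 1)) ≤ 1 := by
          have := pow_pos hβ0 (n + 1); linarith only [this]
        have h7 : 0 ≤ |gradient f (x η n) i - gradient f (x η (n + 1)) i| := abs_nonneg _
        calc (1 - β ^ (n + 1)) * |gradient f (x η n) i - gradient f (x η (n + 1)) i|
            ≤ 1 * (L' * (η * C)) := mul_le_mul h6 h5 h7 one_pos.le
          _ = L' * η * C := by ring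
      have h8 : |m η (n + 1) i - (1 - β ^ (n + 1)) * gradient f (x η n) i
            + (1 - β ^ (n + 1)) * (gradient f (x η n) i - gradient f (x η (n + 1)) i)|
          ≤ (β ^ (n + 1) * ‖m₀‖ + L' * η * C / (1 - β)) + L' * η * C := by
        calc |m η (n + 1) i - (1 - β ^ (n + 1)) * gradient f (x η n) i
            + (1 - β ^ (n + 1)) * (gradient f (x η n) i - gradient f (x η (n + 1)) i)|
            ≤ |m η (n + 1) i - (1 - β ^ (n + 1)) * gradient f (x η n) i|
              + |(1 - β ^ (n + 1)) * (gradient f (x η n) i - gradient f (x η (n + 1)) i)| :=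
              abs_add_le _ _
          _ ≤ _ := add_le_add h1 h2
      calc β * |m η (n + 1) i - (1 - β ^ (n + 1)) * gradient f (x η n) i
            + (1 - β ^ (n + 1)) * (gradient f (x η n) i - gradient f (x η (n + 1)) i)|
          ≤ β * ((β ^ (n + 1) * ‖m₀‖ + L' * η * C / (1 - β)) + L' * η * C) :=
            mul_le_mul_of_nonneg_left h8 (le_of_lt hβ0)
        _ ≤ β ^ (n + 2) * ‖m₀‖ + L' * η * C / (1 - β) := by
            rw [show β ^ (n + 2) = β * β ^ (n + 1) by ring]
            have e1 : L' * η * C / (1 - β) - β * (L' * η * C / (1 - β) + L' * η * C)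
                = L' * η * C * (1 - β) := by field_simp; ring
            have e2 : 0 ≤ L' * η * C * (1 - β) := mul_nonneg hLC0 (le_of_lt h1β)
            nlinarith only [e1, e2, h1β, hβ0, hβ1, hLC0]
  -- error of the second moment estimate
  have hEv : ∀ k i, |v η (k + 1) i - (1 - α ^ (k + 1)) * (gradient f (x η k) i) ^ 2|
      ≤ α ^ (k + 1) * ‖v₀‖ + 2 * M' * L' * η * C / (1 - α) := by
    intro k
    induction k with
    | zero =>
      intro i
      have h1 : v η 1 i - (1 - α ^ 1) * (gradient f (x η 0) i) ^ 2 = α * v₀ i := by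
        rw [hv η hη 0 i, hv0 η hη, pow_one]; ring
      rw [h1, abs_mul, abs_of_pos hα0, pow_one]
      have h2 := euclid_coord_le v₀ i
      have h3 : α * |v₀ i| ≤ α * ‖v₀‖ := mul_le_mul_of_nonneg_left h2 (le_of_lt hα0)
      have h4 : 0 ≤ 2 * M' * L' * η * C / (1 - α) := div_nonneg hMLC0 (le_of_lt h1α)
      linarith only [h2, h3, h4]
    | succ n ih =>
      intro i
      have heq : v η (n + 2) i - (1 - α ^ (n + 2)) * (gradient f (x η (n + 1)) i) ^ 2
          = α * ((v η (n + 1) i - (1 - α ^ (n + 1)) * (gradient f (x η n) i) ^ 2)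
            + (1 - α ^ (n + 1)) * ((gradient f (x η n) i) ^ 2 - (gradient f (x η (n + 1)) i) ^ 2)) := by
        rw [hv η hη (n + 1) i]
        ring
      rw [heq, abs_mul, abs_of_pos hα0]
      have h1 := ih i
      have h2 : |(1 - α ^ (n + 1)) * ((gradient f (x η n) i) ^ 2 - (gradient f (x η (n + 1)) i) ^ 2)|
          ≤ 2 * M' * L' * η * C := by
        rw [abs_mul, abs_of_pos (h1αk n)]
        have hsq : |(gradient f (x η n) i) ^ 2 - (gradient f (x η (n + 1)) i) ^ 2|
            ≤ L' * (η * C) * (2 * M') := by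
          rw [show (gradient f (x η n) i) ^ 2 - (gradient f (x η (n + 1)) i) ^ 2
            = (gradient f (x η n) i - gradient f (x η (n + 1)) i)
              * (gradient f (x η n) i + gradient f (x η (n + 1)) i) by ring]
          rw [abs_mul]
          have h3 := hgL (x η n) (x η (n + 1)) i
          rw [norm_sub_rev] at h3
          have h5 : |gradient f (x η n) i - gradient f (x η (n + 1)) i| ≤ L' * (η * C) :=
            h3.trans (mul_le_mul_of_nonneg_left (hstepn n) hL'0)
          have h6 : |gradient f (x η n) i + gradient f (x η (n + 1)) i| ≤ 2 * M' := by
            have := hgM (x η n) i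
            have := hgM (x η (n + 1)) i
            have := abs_add_le (gradient f (x η n) i) (gradient f (x η (n + 1)) i)
            linarith only [this, hgM (x η n) i, hgM (x η (n+1)) i]
          exact mul_le_mul h5 h6 (abs_nonneg _) (mul_nonneg hL'0 (mul_nonneg (le_of_lt hη) hC0))
        have h6 : (1 - α ^ (n + 1)) ≤ 1 := by
          have := pow_pos hα0 (n + 1); linarith only [this]
        calc (1 - α ^ (n + 1)) * |(gradient f (x η n) i) ^ 2 - (gradient f (x η (n + 1)) i) ^ 2|
            ≤ 1 * (L' * (η * C) * (2 * M')) := mul_le_mul h6 hsq (abs_nonneg _) one_pos.le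
          _ = 2 * M' * L' * η * C := by ring
      have h8 : |v η (n + 1) i - (1 - α ^ (n + 1)) * (gradient f (x η n) i) ^ 2
            + (1 - α ^ (n + 1)) * ((gradient f (x η n) i) ^ 2 - (gradient f (x η (n + 1)) i) ^ 2)|
          ≤ (α ^ (n + 1) * ‖v₀‖ + 2 * M' * L' * η * C / (1 - α)) + 2 * M' * L' * η * C :=
        (abs_add_le _ _).trans (add_le_add h1 h2)
      calc α * |v η (n + 1) i - (1 - α ^ (n + 1)) * (gradient f (x η n) i) ^ 2
            + (1 - α ^ (n + 1)) * ((gradient f (x η n) i) ^ 2 - (gradient f (x η (n + 1)) i) ^ 2)|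
          ≤ α * ((α ^ (n + 1) * ‖v₀‖ + 2 * M' * L' * η * C / (1 - α)) + 2 * M' * L' * η * C) :=
            mul_le_mul_of_nonneg_left h8 (le_of_lt hα0)
        _ ≤ α ^ (n + 2) * ‖v₀‖ + 2 * M' * L' * η * C / (1 - α) := by
            rw [show α ^ (n + 2) = α * α ^ (n + 1) by ring]
            have e1 : 2 * M' * L' * η * C / (1 - α)
                - α * (2 * M' * L' * η * C / (1 - α) + 2 * M' * L' * η * C)
                = 2 * M' * L' * η * C * (1 - α) := by field_simp; ring
            have e2 : 0 ≤ 2 * M' * L' * η * C * (1 - α) := mul_nonneg hMLC0 (le_of_lt h1α)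
            nlinarith only [e1, e2, h1α, hα0, hα1, hMLC0]
  have hγk0 : ∀ k : ℕ, (0:ℝ) ≤ γ ^ k := fun k => pow_nonneg (le_of_lt hγ0) k
  -- the per-step drift bound
  have hdrift : ∀ k i,
      |m η (k + 1) i / (1 - β ^ (k + 1)) / (Real.sqrt (v η (k + 1) i / (1 - α ^ (k + 1))) + ε)
        - gradient f (x η k) i / (|gradient f (x η k) i| + ε)|
      ≤ A * γ ^ k + (c₁ * η + c₂ * Real.sqrt η) := by
    intro k i
    set b : ℝ := gradient f (x η k) i with hbdef
    set Dm : ℝ := m η (k + 1) i / (1 - β ^ (k + 1)) with hDmdef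
    set vh : ℝ := v η (k + 1) i / (1 - α ^ (k + 1)) with hvhdef
    have hvh0 : 0 ≤ vh := div_nonneg (hvnn (k + 1) i) (le_of_lt (h1αk k))
    have hq := quot_bound ε Dm b (Real.sqrt vh) (|b|) hε (Real.sqrt_nonneg _) (abs_nonneg _)
    -- bound |Dm - b|
    have hab : |Dm - b| ≤ (β * γ ^ k * ‖m₀‖ + L' * η * C / (1 - β)) / (1 - β) := by
      have e : Dm - b = (m η (k + 1) i - (1 - β ^ (k + 1)) * b) / (1 - β ^ (k + 1)) := by
        rw [hDmdef, div_sub' (ne_of_gt (h1βk k))]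
      rw [e, abs_div, abs_of_pos (h1βk k)]
      apply div_le_div₀ ?_ ?_ h1β (h1βk' k)
      · exact add_nonneg (mul_nonneg (mul_nonneg (le_of_lt hβ0) (hγk0 k)) (norm_nonneg _))
          (div_nonneg hLC0 (le_of_lt h1β))
      · refine (hEm k i).trans (add_le_add_left ?_ _)
        apply mul_le_mul_of_nonneg_right ?_ (norm_nonneg _)
        rw [hγdef]
        calc β ^ (k + 1) = β ^ k * β := pow_succ β k
          _ ≤ (β ⊔ Real.sqrt α) ^ k * β := mul_le_mul_of_nonneg_right
              (pow_le_pow_left₀ (le_of_lt hβ0) (le_max_left _ _) k) (le_of_lt hβ0)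
          _ = β * (β ⊔ Real.sqrt α) ^ k := mul_comm _ _
    -- bound | |b| - sqrt vh |
    have hrs : |(|b| - Real.sqrt vh)| ≤ Real.sqrt α * γ ^ k * Real.sqrt (‖v₀‖ / (1 - α))
        + Real.sqrt (2 * M' * L' * C / (1 - α) ^ 2) * Real.sqrt η := by
      have e1 : |b| = Real.sqrt (b ^ 2) := (Real.sqrt_sq_eq_abs b).symm
      rw [e1]
      refine (abs_sqrt_sub_sqrt (b ^ 2) vh (sq_nonneg b) hvh0).trans ?_
      have e2 : |b ^ 2 - vh| = |v η (k + 1) i - (1 - α ^ (k + 1)) * b ^ 2| / (1 - α ^ (k + 1)) := by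
        rw [hvhdef, abs_sub_comm]
        rw [show v η (k + 1) i / (1 - α ^ (k + 1)) - b ^ 2
          = (v η (k + 1) i - (1 - α ^ (k + 1)) * b ^ 2) / (1 - α ^ (k + 1)) by
            rw [div_sub' (ne_of_gt (h1αk k))]]
        rw [abs_div, abs_of_pos (h1αk k)]
      have e3 : |b ^ 2 - vh| ≤ α ^ (k + 1) * ‖v₀‖ / (1 - α) + 2 * M' * L' * C / (1 - α) ^ 2 * η := by
        rw [e2]
        calc |v η (k + 1) i - (1 - α ^ (k + 1)) * b ^ 2| / (1 - α ^ (k + 1))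
            ≤ (α ^ (k + 1) * ‖v₀‖ + 2 * M' * L' * η * C / (1 - α)) / (1 - α) :=
              div_le_div₀
                (add_nonneg (mul_nonneg (pow_nonneg (le_of_lt hα0) _) (norm_nonneg _))
                  (div_nonneg hMLC0 (le_of_lt h1α)))
                (hEv k i) h1α (h1αk' k)
          _ = α ^ (k + 1) * ‖v₀‖ / (1 - α) + 2 * M' * L' * C / (1 - α) ^ 2 * η :=
              field_id1 (1 - α) (α ^ (k + 1) * ‖v₀‖) (2 * M' * L' * η * C) (2 * M' * L' * C)
                η (ne_of_gt h1α) (by ring)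
      refine (Real.sqrt_le_sqrt e3).trans ?_
      refine (sqrt_add_le' _ _
        (div_nonneg (mul_nonneg (pow_nonneg (le_of_lt hα0) _) (norm_nonneg _)) (le_of_lt h1α))
        (mul_nonneg
          (div_nonneg (mul_nonneg (mul_nonneg (mul_nonneg (by norm_num) hM'0) hL'0) hC0)
            (sq_nonneg _)) (le_of_lt hη))).trans ?_
      have e4 : Real.sqrt (α ^ (k + 1) * ‖v₀‖ / (1 - α))
          ≤ Real.sqrt α * γ ^ k * Real.sqrt (‖v₀‖ / (1 - α)) := by
        rw [mul_div_assoc, Real.sqrt_mul (pow_nonneg (le_of_lt hα0) _), sqrt_pow'' α (le_of_lt hα0)]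
        have e5 : (Real.sqrt α) ^ (k + 1) ≤ Real.sqrt α * γ ^ k := by
          rw [hγdef]
          calc (Real.sqrt α) ^ (k + 1) = (Real.sqrt α) ^ k * Real.sqrt α := pow_succ _ k
            _ ≤ (β ⊔ Real.sqrt α) ^ k * Real.sqrt α := mul_le_mul_of_nonneg_right
                (pow_le_pow_left₀ (Real.sqrt_nonneg α) (le_max_right _ _) k) (Real.sqrt_nonneg α)
            _ = Real.sqrt α * (β ⊔ Real.sqrt α) ^ k := mul_comm _ _
        exact mul_le_mul_of_nonneg_right e5 (Real.sqrt_nonneg _)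
      have hW0 : 0 ≤ 2 * M' * L' * C / (1 - α) ^ 2 :=
        div_nonneg (mul_nonneg (mul_nonneg (mul_nonneg (by norm_num) hM'0) hL'0) hC0) (sq_nonneg _)
      have e6 : Real.sqrt (2 * M' * L' * C / (1 - α) ^ 2 * η)
          = Real.sqrt (2 * M' * L' * C / (1 - α) ^ 2) * Real.sqrt η :=
        Real.sqrt_mul hW0 η
      rw [e6]
      exact add_le_add e4 le_rfl
    -- combine
    refine hq.trans ?_
    have h2 : |b| * |(|b| - Real.sqrt vh)| ≤ M' * (Real.sqrt α * γ ^ k * Real.sqrt (‖v₀‖ / (1 - α))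
        + Real.sqrt (2 * M' * L' * C / (1 - α) ^ 2) * Real.sqrt η) :=
      mul_le_mul (hgM (x η k) i) hrs (abs_nonneg _) hM'0
    calc |Dm - b| / ε + |b| * |(|b| - Real.sqrt vh)| / ε ^ 2
        ≤ ((β * γ ^ k * ‖m₀‖ + L' * η * C / (1 - β)) / (1 - β)) / ε
          + M' * (Real.sqrt α * γ ^ k * Real.sqrt (‖v₀‖ / (1 - α))
            + Real.sqrt (2 * M' * L' * C / (1 - α) ^ 2) * Real.sqrt η) / ε ^ 2 := by
          apply add_le_add
          · exact div_le_div_of_nonneg_right hab (le_of_lt hε)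
          · exact div_le_div_of_nonneg_right h2 (sq_nonneg ε)
      _ = A * γ ^ k + (c₁ * η + c₂ * Real.sqrt η) := by
          rw [hAdef, hc₁def, hc₂def]
          field_simp
          ring
    -- facts about the ODE solution
  have hphi1 : ∀ (z : EuclideanSpace ℝ (Fin d)) (i : Fin d),
      |gradient f z i / (|gradient f z i| + ε)| ≤ 1 := fun z i => phi_le_one ε _ hε
  have hycont : ∀ i, ContinuousOn (fun s => y s i) (Set.Ici (0:ℝ)) := by
    intro i t ht
    exact ((hy t ht i).continuousAt).continuousWithinAt
  have hylip : ∀ s t : ℝ, 0 ≤ s → s ≤ t → ∀ i, |y t i - y s i| ≤ t - s := by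
    intro s t hs hst i
    rcases eq_or_lt_of_le hst with h | h
    · rw [h]; simp
    · obtain ⟨ξ, hξ, hslope⟩ := exists_hasDerivAt_eq_slope (fun u => y u i)
        (fun u => -(gradient f (y u) i / (|gradient f (y u) i| + ε))) h
        ((hycont i).mono (fun u hu => le_trans hs hu.1))
        (fun u hu => hy u (le_trans hs (le_of_lt hu.1)) i)
      rw [eq_comm, div_eq_iff (ne_of_gt (by linarith only [h] : (0:ℝ) < t - s))] at hslope
      rw [hslope, abs_mul, abs_neg, abs_of_pos (by linarith only [h] : (0:ℝ) < t - s)]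
      have h2 := hphi1 (y ξ) i
      exact mul_le_of_le_one_left (by linarith only [h]) h2
  have hynlip : ∀ s t : ℝ, 0 ≤ s → s ≤ t → ‖y t - y s‖ ≤ Real.sqrt d * (t - s) := by
    intro s t hs hst
    apply euclid_norm_le _ _ (by linarith only [hst])
    intro i
    simp only [PiLp.sub_apply]
    exact hylip s t hs hst i
  -- the discrete Gronwall-type induction
  set uu : ℝ := η * K * Real.sqrt d with huudef
  have huu0 : 0 ≤ uu := mul_nonneg (mul_nonneg (le_of_lt hη) hK0) (Real.sqrt_nonneg d)
  set B : ℝ := η * A / (1 - γ) with hBdef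
  have hB0 : 0 ≤ B := div_nonneg (mul_nonneg (le_of_lt hη) hA0) (le_of_lt h1γ)
  set cc : ℝ := c₁ * η + c₂ * Real.sqrt η + K * Real.sqrt d * η with hccdef
  have hcc0 : 0 ≤ cc :=
    add_nonneg (add_nonneg (mul_nonneg hc₁0 (le_of_lt hη))
      (mul_nonneg hc₂0 (Real.sqrt_nonneg η)))
      (mul_nonneg (mul_nonneg hK0 (Real.sqrt_nonneg d)) (le_of_lt hη))
  clear_value uu B cc
  have hγkle : ∀ k : ℕ, γ ^ k ≤ 1 := fun k => pow_le_one₀ (le_of_lt hγ0) (le_of_lt hγ1)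
  have hρ0 : ∀ k : ℕ, 0 ≤ (1+uu)^k * (B*(1-γ^k) + (k:ℝ)*η*cc) := by
    intro k
    apply mul_nonneg (pow_nonneg (by linarith only [huu0]) k)
    apply add_nonneg (mul_nonneg hB0 (by linarith only [hγkle k]))
    exact mul_nonneg (mul_nonneg (Nat.cast_nonneg k) (le_of_lt hη)) hcc0
  have hkey : ∀ k : ℕ, ∀ i : Fin d,
      |x η k i - y ((k:ℝ)*η) i| ≤ (1+uu)^k * (B*(1-γ^k) + (k:ℝ)*η*cc) := by
    intro k
    induction k with
    | zero =>
      intro i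
      norm_num [hx0 η hη, hy0]
    | succ k ih =>
      intro i
      have htk : (0:ℝ) ≤ (k:ℝ)*η := mul_nonneg (Nat.cast_nonneg k) (le_of_lt hη)
      have htke : ((k:ℝ)+1)*η = (k:ℝ)*η + η := by ring
      have htk1 : (k:ℝ)*η < ((k:ℝ)+1)*η := by rw [htke]; linarith only [hη]
      -- the norm bound coming from the inductive hypothesis
      have hen : ‖x η k - y ((k:ℝ)*η)‖
          ≤ Real.sqrt d * ((1+uu)^k * (B*(1-γ^k) + (k:ℝ)*η*cc)) := by
        apply euclid_norm_le _ _ (hρ0 k)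
        intro j
        simp only [PiLp.sub_apply]
        exact ih j
      -- mean value theorem on [kη, (k+1)η]
      obtain ⟨ξ, hξ, hslope⟩ := exists_hasDerivAt_eq_slope (fun u => y u i)
        (fun u => -(gradient f (y u) i / (|gradient f (y u) i| + ε))) htk1
        ((hycont i).mono (fun u hu => le_trans htk hu.1))
        (fun u hu => hy u (le_trans htk (le_of_lt hu.1)) i)
      have hne : (((k:ℝ)+1)*η - (k:ℝ)*η) ≠ 0 := by
        have e0 : ((k:ℝ)+1)*η - (k:ℝ)*η = η := by ring
        rw [e0]
        exact ne_of_gt hη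
      rw [eq_comm, div_eq_iff hne] at hslope
      have hyeq : y (((k:ℝ)+1)*η) i = y ((k:ℝ)*η) i
          - η * (gradient f (y ξ) i / (|gradient f (y ξ) i| + ε)) := by
        linear_combination hslope
      have hxeq : x η (k+1) i = x η k i
          - η * (m η (k + 1) i / (1 - β ^ (k + 1))
              / (Real.sqrt (v η (k + 1) i / (1 - α ^ (k + 1))) + ε)) := by
        rw [hx η hη k i]; ring
      have hcomb : x η (k+1) i - y (((k:ℝ)+1)*η) i
          = (x η k i - y ((k:ℝ)*η) i)
            - η * ((m η (k + 1) i / (1 - β ^ (k + 1))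
                / (Real.sqrt (v η (k + 1) i / (1 - α ^ (k + 1))) + ε)
                - gradient f (x η k) i / (|gradient f (x η k) i| + ε))
              + (gradient f (x η k) i / (|gradient f (x η k) i| + ε)
                - gradient f (y ((k:ℝ)*η)) i / (|gradient f (y ((k:ℝ)*η)) i| + ε))
              + (gradient f (y ((k:ℝ)*η)) i / (|gradient f (y ((k:ℝ)*η)) i| + ε)
                - gradient f (y ξ) i / (|gradient f (y ξ) i| + ε))) := by
        rw [hxeq, hyeq]; ring
      have hD2 : |gradient f (x η k) i / (|gradient f (x η k) i| + ε)
            - gradient f (y ((k:ℝ)*η)) i / (|gradient f (y ((k:ℝ)*η)) i| + ε)|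
          ≤ K * (Real.sqrt d * ((1+uu)^k * (B*(1-γ^k) + (k:ℝ)*η*cc))) := by
        refine (phi_lip ε _ _ hε).trans ?_
        have h1 := hgL (x η k) (y ((k:ℝ)*η)) i
        have h2ε : (0:ℝ) ≤ 2/ε := div_nonneg (by norm_num) (le_of_lt hε)
        calc 2/ε * |gradient f (x η k) i - gradient f (y ((k:ℝ)*η)) i|
            ≤ 2/ε * (L' * ‖x η k - y ((k:ℝ)*η)‖) := mul_le_mul_of_nonneg_left h1 h2ε
          _ ≤ 2/ε * (L' * (Real.sqrt d * ((1+uu)^k * (B*(1-γ^k) + (k:ℝ)*η*cc)))) :=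
              mul_le_mul_of_nonneg_left (mul_le_mul_of_nonneg_left hen hL'0) h2ε
          _ = K * (Real.sqrt d * ((1+uu)^k * (B*(1-γ^k) + (k:ℝ)*η*cc))) := by
              rw [hKdef]; ring
      have hD3 : |gradient f (y ((k:ℝ)*η)) i / (|gradient f (y ((k:ℝ)*η)) i| + ε)
            - gradient f (y ξ) i / (|gradient f (y ξ) i| + ε)|
          ≤ K * (Real.sqrt d * η) := by
        refine (phi_lip ε _ _ hε).trans ?_
        have h1 := hgL (y ((k:ℝ)*η)) (y ξ) i
        have h2ε : (0:ℝ) ≤ 2/ε := div_nonneg (by norm_num) (le_of_lt hε)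
        have h3 : ‖y ((k:ℝ)*η) - y ξ‖ ≤ Real.sqrt d * η := by
          rw [norm_sub_rev]
          refine (hynlip ((k:ℝ)*η) ξ htk (le_of_lt hξ.1)).trans ?_
          apply mul_le_mul_of_nonneg_left ?_ (Real.sqrt_nonneg d)
          have := hξ.2
          rw [htke] at this
          linarith only [this]
        calc 2/ε * |gradient f (y ((k:ℝ)*η)) i - gradient f (y ξ) i|
            ≤ 2/ε * (L' * ‖y ((k:ℝ)*η) - y ξ‖) := mul_le_mul_of_nonneg_left h1 h2ε
          _ ≤ 2/ε * (L' * (Real.sqrt d * η)) :=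
              mul_le_mul_of_nonneg_left (mul_le_mul_of_nonneg_left h3 hL'0) h2ε
          _ = K * (Real.sqrt d * η) := by rw [hKdef]; ring
      have hD1 := hdrift k i
      -- put the pieces together
      have hstep1 : |x η (k+1) i - y (((k:ℝ)+1)*η) i|
          ≤ |x η k i - y ((k:ℝ)*η) i|
            + η * ((A * γ ^ k + (c₁ * η + c₂ * Real.sqrt η))
              + K * (Real.sqrt d * ((1+uu)^k * (B*(1-γ^k) + (k:ℝ)*η*cc)))
              + K * (Real.sqrt d * η)) := by
        rw [hcomb]
        refine (abs_sub _ _).trans ?_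
        have h4 : |η * ((m η (k + 1) i / (1 - β ^ (k + 1))
                / (Real.sqrt (v η (k + 1) i / (1 - α ^ (k + 1))) + ε)
                - gradient f (x η k) i / (|gradient f (x η k) i| + ε))
              + (gradient f (x η k) i / (|gradient f (x η k) i| + ε)
                - gradient f (y ((k:ℝ)*η)) i / (|gradient f (y ((k:ℝ)*η)) i| + ε))
              + (gradient f (y ((k:ℝ)*η)) i / (|gradient f (y ((k:ℝ)*η)) i| + ε)
                - gradient f (y ξ) i / (|gradient f (y ξ) i| + ε)))|
            ≤ η * ((A * γ ^ k + (c₁ * η + c₂ * Real.sqrt η))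
              + K * (Real.sqrt d * ((1+uu)^k * (B*(1-γ^k) + (k:ℝ)*η*cc)))
              + K * (Real.sqrt d * η)) := by
          rw [abs_mul, abs_of_pos hη]
          apply mul_le_mul_of_nonneg_left ?_ (le_of_lt hη)
          refine (abs_add_le _ _).trans ?_
          refine (add_le_add (abs_add_le _ _) le_rfl).trans ?_
          exact add_le_add (add_le_add hD1 hD2) hD3
        linarith only [h4]
      -- Gronwall-type recursion step
      have hBγ : B * (1 - γ) = η * A := by
        rw [hBdef, div_mul_cancel₀ _ (ne_of_gt h1γ)]
      push_cast
      rw [show γ ^ (k+1) = γ * γ ^ k from by rw [pow_succ]; ring]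
      refine le_trans hstep1 ?_
      exact gronwall_step η K (Real.sqrt d) A (γ ^ k) c₁ c₂ (Real.sqrt η) B γ cc (k:ℝ) uu
        ((1+uu)^k) ((1+uu)^(k+1)) _ _ hη hK0 (Real.sqrt_nonneg d) hA0 (hγk0 k) hcc0 (hρ0 k)
        (Nat.cast_nonneg k) hB0 huudef (by rw [pow_succ]; ring)
        (one_le_pow₀ (by linarith only [huu0])) rfl hBγ hccdef (ih i)
    -- conclusion
  intro t ht
  obtain ⟨ht0, htT⟩ := ht
  have hk1 : ((⌊t/η⌋₊ : ℕ):ℝ)*η ≤ t := by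
    have h1 := Nat.floor_le (show 0 ≤ t/η from div_nonneg ht0 (le_of_lt hη))
    calc ((⌊t/η⌋₊ : ℕ):ℝ)*η ≤ (t/η)*η := mul_le_mul_of_nonneg_right h1 (le_of_lt hη)
      _ = t := div_mul_cancel₀ t (ne_of_gt hη)
  have hk2 : t < (((⌊t/η⌋₊ : ℕ):ℝ)+1)*η := by
    have h1 := Nat.lt_floor_add_one (t/η)
    calc t = (t/η)*η := (div_mul_cancel₀ t (ne_of_gt hη)).symm
      _ < (((⌊t/η⌋₊ : ℕ):ℝ)+1)*η := by
          exact mul_lt_mul_of_pos_right h1 hη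
  rw [hX η hη t ht0 ⌊t/η⌋₊ ⟨hk1, hk2⟩]
  have hkT : ((⌊t/η⌋₊ : ℕ):ℝ)*η ≤ T := le_trans hk1 htT
  set k : ℕ := ⌊t/η⌋₊ with hkdef
  clear_value k
  -- bound the Gronwall quantity
  have hρin0 : 0 ≤ B*(1-γ^k) + (k:ℝ)*η*cc :=
    add_nonneg (mul_nonneg hB0 (by linarith only [hγkle k]))
      (mul_nonneg (mul_nonneg (Nat.cast_nonneg k) (le_of_lt hη)) hcc0)
  have hρk : (1+uu)^k * (B*(1-γ^k) + (k:ℝ)*η*cc)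
      ≤ Real.exp (K*Real.sqrt d*T) * (B + T*cc) := by
    have h1 : (1+uu)^k ≤ Real.exp (K*Real.sqrt d*T) := by
      calc (1+uu)^k ≤ (Real.exp uu)^k :=
            pow_le_pow_left₀ (by linarith only [huu0]) (by linarith only [Real.add_one_le_exp uu]) k
        _ = Real.exp ((k:ℝ)*uu) := by rw [← Real.exp_nat_mul]
        _ ≤ Real.exp (K*Real.sqrt d*T) := by
            apply Real.exp_le_exp.mpr
            rw [huudef]
            calc (k:ℝ)*(η*K*Real.sqrt d) = K*Real.sqrt d*((k:ℝ)*η) := by ring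
              _ ≤ K*Real.sqrt d*T := mul_le_mul_of_nonneg_left hkT
                  (mul_nonneg hK0 (Real.sqrt_nonneg d))
    have h2 : B*(1-γ^k) + (k:ℝ)*η*cc ≤ B + T*cc := by
      have h3 : B*(1-γ^k) ≤ B :=
        mul_le_of_le_one_right hB0 (by linarith only [pow_nonneg (le_of_lt hγ0) k])
      have h4 : (k:ℝ)*η*cc ≤ T*cc := mul_le_mul_of_nonneg_right hkT hcc0
      linarith only [h3, h4]
    exact mul_le_mul h1 h2 hρin0 (le_of_lt (Real.exp_pos _))
  have hbound1 : ‖x η k - y ((k:ℝ)*η)‖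
      ≤ Real.sqrt d * ((1+uu)^k * (B*(1-γ^k) + (k:ℝ)*η*cc)) := by
    apply euclid_norm_le _ _ (hρ0 k)
    intro j
    simp only [PiLp.sub_apply]
    exact hkey k j
  have hbound2 : ‖y ((k:ℝ)*η) - y t‖ ≤ Real.sqrt d * η := by
    rw [norm_sub_rev]
    refine (hynlip ((k:ℝ)*η) t (mul_nonneg (Nat.cast_nonneg k) (le_of_lt hη)) hk1).trans ?_
    apply mul_le_mul_of_nonneg_left ?_ (Real.sqrt_nonneg d)
    have e : (((k:ℕ):ℝ)+1)*η = ((k:ℕ):ℝ)*η + η := by ring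
    rw [e] at hk2
    linarith only [hk2]
  -- the smallness of η
  have hηmin := lt_min_iff.mp hηlt
  have hη1 : η < 1 := hηmin.1
  have hη2 : η < (τ/(P₁+P₂+1))^2 := hηmin.2
  have hsqη : Real.sqrt η < τ/(P₁+P₂+1) := by
    have h5 := Real.sqrt_lt_sqrt (le_of_lt hη) hη2
    rwa [Real.sqrt_sq (by positivity)] at h5
  have hs1 : Real.sqrt η ≤ 1 := by
    rw [show (1:ℝ) = Real.sqrt 1 by simp]
    exact Real.sqrt_le_sqrt (le_of_lt hη1)
  have hηle : η ≤ Real.sqrt η := by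
    nlinarith only [Real.sq_sqrt (le_of_lt hη), Real.sqrt_nonneg η, hs1]
  have h10 : Real.sqrt η * (P₁+P₂+1) < τ := by
    rw [← lt_div_iff₀ (by positivity : (0:ℝ) < P₁+P₂+1)]
    exact hsqη
  calc ‖x η k - y t‖ ≤ ‖x η k - y ((k:ℝ)*η)‖ + ‖y ((k:ℝ)*η) - y t‖ :=
        norm_sub_le_norm_sub_add_norm_sub _ _ _
    _ ≤ Real.sqrt d * (Real.exp (K*Real.sqrt d*T) * (B + T*cc)) + Real.sqrt d * η :=
        add_le_add (hbound1.trans (mul_le_mul_of_nonneg_left hρk (Real.sqrt_nonneg d))) hbound2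
    _ = P₁*η + P₂*Real.sqrt η := by
        rw [hP₁def, hP₂def, hBdef, hccdef]
        field_simp
        ring
    _ < τ := by
        nlinarith only [mul_le_mul_of_nonneg_left hηle hP₁0, h10, Real.sqrt_nonneg η, hP₂0]
end

section
/- Let f : ℝ^d → ℝ be continuously differentiable with f(x) ≥ 0 for all x, satisfying the Polyak–Łojasiewicz condition ‖∇f(x)‖₂² ≥ μ f(x) for all x, with μ > 0. Let x : [0,∞) → ℝ^d be differentiable with ẋ_i(t) = −sign(∂_i f(x(t))) for every coordinate i and every t ≥ 0, started from x(0) = x₀. Then continuous-time signGD reaches the global minimum in finite time: f(x(t*)) = 0 at the time t* = 2√(f(x₀))/√μ. -/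
private lemma mul_sign_eq_abs (a : ℝ) : a * Real.sign a = |a| := by
  rcases lt_trichotomy a 0 with h | h | h
  · rw [Real.sign_of_neg h, abs_of_neg h]; ring
  · simp [h]
  · rw [Real.sign_of_pos h, abs_of_pos h]; ring

private lemma euclid_norm_le_sum_abs (d : ℕ) (z : EuclideanSpace ℝ (Fin d)) :
    ‖z‖ ≤ ∑ i, |z i| := by
  rw [EuclideanSpace.norm_eq]
  simp only [Real.norm_eq_abs]
  have h1 : ∑ i, |z i| ^ 2 ≤ (∑ i, |z i|) ^ 2 :=
    Finset.sum_sq_le_sq_sum_of_nonneg (fun i _ => abs_nonneg _)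
  calc Real.sqrt (∑ i, |z i| ^ 2) ≤ Real.sqrt ((∑ i, |z i|) ^ 2) := Real.sqrt_le_sqrt h1
  _ = _ := Real.sqrt_sq (Finset.sum_nonneg fun i _ => abs_nonneg _)

/-- Under the PL condition `‖∇f(x)‖² ≥ μ f(x)` (with `μ > 0`, `f ≥ 0`), continuous-time
signGD `ẋ = −sign(∇f(x))` reaches the global minimum in finite time:
`f(x(t*)) = 0` at `t* = 2√f(x₀)/√μ`. -/
theorem signGD_finite_time_convergence
    (d : ℕ) (f : EuclideanSpace ℝ (Fin d) → ℝ)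
    (hf : ContDiff ℝ 1 f)
    (hfnonneg : ∀ z, 0 ≤ f z)
    (μ : ℝ) (hμ : 0 < μ)
    (hPL : ∀ z, μ * f z ≤ ‖gradient f z‖ ^ 2)
    (x₀ : EuclideanSpace ℝ (Fin d))
    (x : ℝ → EuclideanSpace ℝ (Fin d))
    (hx0 : x 0 = x₀)
    (hx : ∀ t : ℝ, 0 ≤ t → ∀ i,
      HasDerivAt (fun s => x s i) (-Real.sign (gradient f (x t) i)) t) :
    f (x (2 * Real.sqrt (f x₀) / Real.sqrt μ)) = 0 := by
  have hsμ : 0 < Real.sqrt μ := Real.sqrt_pos.2 hμ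
  set T : ℝ := 2 * Real.sqrt (f x₀) / Real.sqrt μ with hTdef
  have hT0 : 0 ≤ T := by positivity
  set g : ℝ → ℝ := fun t => f (x t) with hgdef
  set D : ℝ → ℝ := fun t => ∑ i, gradient f (x t) i * (-Real.sign (gradient f (x t) i))
    with hDdef
  -- derivative of the curve
  have hxd : ∀ t : ℝ, 0 ≤ t →
      HasDerivAt x (WithLp.toLp 2 (fun i => -Real.sign (gradient f (x t) i)) : EuclideanSpace ℝ (Fin d)) t := by
    intro t ht
    set e := PiLp.continuousLinearEquiv 2 ℝ (fun _ : Fin d => ℝ) with he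
    have hy : HasDerivAt (fun s => e (x s))
        (e (WithLp.toLp 2 (fun i => -Real.sign (gradient f (x t) i)) : EuclideanSpace ℝ (Fin d))) t :=
      hasDerivAt_pi.2 (hx t ht)
    have h2 := e.symm.hasFDerivAt.comp_hasDerivAt t hy
    exact h2
  -- derivative of g
  have hgd : ∀ t : ℝ, 0 ≤ t → HasDerivAt g (D t) t := by
    intro t ht
    have hgrad : HasGradientAt f (gradient f (x t)) (x t) :=
      ((hf.differentiable one_ne_zero) (x t)).hasGradientAt
    have hfd : HasFDerivAt f (InnerProductSpace.toDual ℝ _ (gradient f (x t))) (x t) := hgrad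
    have := hfd.comp_hasDerivAt t (hxd t ht)
    have heq : (InnerProductSpace.toDual ℝ _ (gradient f (x t)))
        (WithLp.toLp 2 (fun i => -Real.sign (gradient f (x t) i)) : EuclideanSpace ℝ (Fin d)) = D t := by
      rw [InnerProductSpace.toDual_apply_apply, PiLp.inner_apply]
      simp [RCLike.inner_apply, hDdef, mul_comm]
    rwa [heq] at this
  -- the key inequality on D
  have hDle : ∀ t : ℝ, 0 ≤ t → D t ≤ -Real.sqrt (μ * g t) := by
    intro t ht
    have h1 : D t = -∑ i, |gradient f (x t) i| := by
      rw [hDdef, ← Finset.sum_neg_distrib]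
      exact Finset.sum_congr rfl fun i _ => by
        rw [← mul_sign_eq_abs (gradient f (x t) i)]; ring
    have h2 : ‖gradient f (x t)‖ ≤ ∑ i, |gradient f (x t) i| := euclid_norm_le_sum_abs d _
    have h3 : Real.sqrt (μ * g t) ≤ ‖gradient f (x t)‖ := by
      have := hPL (x t)
      calc Real.sqrt (μ * g t) ≤ Real.sqrt (‖gradient f (x t)‖ ^ 2) := Real.sqrt_le_sqrt this
      _ = ‖gradient f (x t)‖ := Real.sqrt_sq (norm_nonneg _)
    rw [h1]
    linarith
  have hDnonpos : ∀ t : ℝ, 0 ≤ t → D t ≤ 0 := fun t ht =>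
    (hDle t ht).trans (neg_nonpos.2 (Real.sqrt_nonneg _))
  -- g is antitone on [0, ∞)
  have hganti : AntitoneOn g (Set.Ici 0) := by
    apply antitoneOn_of_deriv_nonpos (convex_Ici 0)
    · exact fun t ht => ((hgd t ht).continuousAt).continuousWithinAt
    · intro t ht
      rw [interior_Ici] at ht
      exact (hgd t (le_of_lt ht)).differentiableAt.differentiableWithinAt
    · intro t ht
      rw [interior_Ici] at ht
      rw [(hgd t (le_of_lt ht)).deriv]
      exact hDnonpos t (le_of_lt ht)
  -- finish by contradiction
  by_contra hne
  have hpos : 0 < g T := lt_of_le_of_ne (hfnonneg _) (Ne.symm hne)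
  have hposon : ∀ s ∈ Set.Icc (0:ℝ) T, 0 < g s := fun s hs =>
    lt_of_lt_of_le hpos (hganti hs.1 hT0 hs.2)
  set h : ℝ → ℝ := fun t => Real.sqrt (g t) + Real.sqrt μ / 2 * t with hhdef
  have hhd : ∀ t ∈ Set.Icc (0:ℝ) T,
      HasDerivAt h (1 / (2 * Real.sqrt (g t)) * D t + Real.sqrt μ / 2) t := by
    intro t ht
    have hsg : HasDerivAt (fun s => Real.sqrt (g s)) (1 / (2 * Real.sqrt (g t)) * D t) t :=
      (Real.hasDerivAt_sqrt (ne_of_gt (hposon t ht))).comp t (hgd t ht.1)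
    have := hsg.add ((hasDerivAt_id t).const_mul (Real.sqrt μ / 2))
    rw [mul_one] at this
    exact this
  have hderiv_nonpos : ∀ t ∈ Set.Icc (0:ℝ) T,
      1 / (2 * Real.sqrt (g t)) * D t + Real.sqrt μ / 2 ≤ 0 := by
    intro t ht
    have hsg : 0 < Real.sqrt (g t) := Real.sqrt_pos.2 (hposon t ht)
    have h1 : D t ≤ -(Real.sqrt μ * Real.sqrt (g t)) := by
      have := hDle t ht.1
      rwa [Real.sqrt_mul hμ.le] at this
    have h2 : 1 / (2 * Real.sqrt (g t)) * D t ≤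
        1 / (2 * Real.sqrt (g t)) * (-(Real.sqrt μ * Real.sqrt (g t))) := by
      apply mul_le_mul_of_nonneg_left h1
      positivity
    have h3 : 1 / (2 * Real.sqrt (g t)) * (-(Real.sqrt μ * Real.sqrt (g t)))
        = -(Real.sqrt μ / 2) := by
      field_simp
    linarith
  have hhanti : AntitoneOn h (Set.Icc 0 T) := by
    apply antitoneOn_of_deriv_nonpos (convex_Icc 0 T)
    · exact fun t ht => ((hhd t ht).continuousAt).continuousWithinAt
    · intro t ht
      rw [interior_Icc] at ht
      exact (hhd t ⟨ht.1.le, ht.2.le⟩).differentiableAt.differentiableWithinAt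
    · intro t ht
      rw [interior_Icc] at ht
      rw [(hhd t ⟨ht.1.le, ht.2.le⟩).deriv]
      exact hderiv_nonpos t ⟨ht.1.le, ht.2.le⟩
  have hle : h T ≤ h 0 := hhanti (Set.left_mem_Icc.2 hT0) ⟨hT0, le_rfl⟩ hT0
  have hg0 : g 0 = f x₀ := by rw [hgdef]; simp [hx0]
  have hμT : Real.sqrt μ / 2 * T = Real.sqrt (f x₀) := by
    rw [hTdef]
    field_simp
  have : Real.sqrt (g T) ≤ 0 := by
    have := hle
    rw [hhdef] at this
    simp only [mul_zero, add_zero] at this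
    rw [hg0, hμT] at this
    linarith
  exact absurd this (not_le.2 (Real.sqrt_pos.2 hpos))
end
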